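/- arXiv:2401.12825 — 8 statements merged into one kernel-verified Lean document; each statement's English description precedes it below -/
import Mathlib

section
/- Let P be a poset regarded as a category, let F : C ⥤ P be a functor, let W_P be the class of morphisms f of C such that F.map f is an isomorphism, and let L : C ⥤ D be a localization of C at W_P. Then any functor G : D ⥤ P equipped with a natural isomorphism L ⋙ G ≅ F is conservative (reflects isomorphisms). -/
open CategoryTheory

lemma isIso_of_comp_poset {P : Type*} [Preorder P] {X Y Z : P}
    (f : X ⟶ Y) (g : Y ⟶ Z) (h : IsIso (f ≫ g)) : IsIso f ∧ IsIso g := by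
  obtain ⟨i, _, _⟩ := h
  exact ⟨⟨⟨g ≫ i, Subsingleton.elim _ _, Subsingleton.elim _ _⟩⟩,
         ⟨⟨i ≫ f, Subsingleton.elim _ _, Subsingleton.elim _ _⟩⟩⟩

/-- Let `F : C ⥤ P` be a functor to a poset, `W_P` the class of morphisms inverted by `F`,
and `L : C ⥤ D` a localization of `C` at `W_P`. Then any functor `G : D ⥤ P` with
`L ⋙ G ≅ F` is conservative. -/
theorem conservative_of_localization_over_poset
    {C : Type*} [Category C] {D : Type*} [Category D]
    {P : Type*} [PartialOrder P]
    (F : C ⥤ P) (L : C ⥤ D) (G : D ⥤ P)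
    (hL : L.IsLocalization (fun _ _ f => IsIso (F.map f)))
    (e : L ⋙ G ≅ F) :
    G.ReflectsIsomorphisms := by
  let W : MorphismProperty C := fun _ _ f => IsIso (F.map f)
  haveI : L.IsLocalization W := hL
  let E := Localization.uniq W.Q L W
  let α : W.Q ⋙ E.functor ≅ L := Localization.compUniqFunctor W.Q L W
  let Q' : MorphismProperty W.Localization :=
    fun _ _ f => IsIso (G.map (E.functor.map f)) → IsIso (E.functor.map f)
  haveI : Q'.IsStableUnderComposition := ⟨by
    intro X Y Z f g hf hg h
    rw [E.functor.map_comp] at h ⊢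
    rw [G.map_comp] at h
    obtain ⟨h1, h2⟩ := isIso_of_comp_poset _ _ h
    haveI := hf h1
    haveI := hg h2
    infer_instance⟩
  have htop : Q' = ⊤ := by
    refine Localization.Construction.morphismProperty_eq_top' Q' ?_ ?_
    · intro X Y f hf
      have h1 : IsIso (F.map f) :=
        (NatIso.isIso_map_iff (Functor.isoWhiskerRight α G ≪≫ e) f).1 hf
      have h2 : IsIso (L.map f) := Localization.inverts L W f h1
      exact (NatIso.isIso_map_iff α f).2 h2
    · intro X Y i hi _
      infer_instance
  constructor
  intro X Y f hf
  have hQ : Q' (E.inverse.map f) := by rw [htop]; trivial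
  have h1 : IsIso (G.map (E.functor.map (E.inverse.map f))) :=
    (NatIso.isIso_map_iff (Functor.isoWhiskerRight E.counitIso G) f).2 hf
  exact (NatIso.isIso_map_iff E.counitIso f).1 (hQ h1)
end

section
/- Let P be a poset regarded as a category, let F : C ⥤ P be a functor, let W_P be the class of morphisms f of C such that F.map f is an isomorphism, and let L : C ⥤ D be a localization of C at W_P. Then D is idempotent complete. -/
open CategoryTheory

/-- In a preorder category, any morphism whose reverse inequality holds is an iso. -/
lemma isIso_of_le {P : Type*} [Preorder P] {a b : P} (f : a ⟶ b) (h : b ≤ a) :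
    IsIso f :=
  ⟨homOfLE h, Subsingleton.elim _ _, Subsingleton.elim _ _⟩

/-- Let `F : C ⥤ P` be a functor to a poset, `W_P` the class of morphisms inverted by `F`,
and `L : C ⥤ D` a localization of `C` at `W_P`. Then `D` is idempotent complete. -/
theorem idempotentComplete_of_localization_over_poset
    {C : Type*} [Category C] {D : Type*} [Category D]
    {P : Type*} [PartialOrder P]
    (F : C ⥤ P) (L : C ⥤ D)
    (hL : L.IsLocalization (fun _ _ f => IsIso (F.map f))) :
    IsIdempotentComplete D := by
  set W : MorphismProperty C := fun _ _ f => IsIso (F.map f) with hW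
  have hF : W.IsInvertedBy F := fun _ _ f hf => hf
  let F' : W.Localization ⥤ P := Localization.Construction.lift F hF
  have hfac : W.Q ⋙ F' = F := Localization.Construction.fac F hF
  -- conservativity of F' on W.Localization
  let Q : MorphismProperty W.Localization :=
    fun _ _ f => IsIso (F'.map f) → IsIso f
  have hcomp : Q.IsStableUnderComposition := by
    constructor
    intro X Y Z f g hf hg hfg
    have h1 : F'.obj X ≤ F'.obj Y := leOfHom (F'.map f)
    have h2 : F'.obj Y ≤ F'.obj Z := leOfHom (F'.map g)
    have h3 : F'.obj Z ≤ F'.obj X := by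
      have := hfg
      exact leOfHom (inv (F'.map (f ≫ g)))
    have hf' : IsIso f := hf (isIso_of_le _ (h2.trans h3))
    have hg' : IsIso g := hg (isIso_of_le _ (h3.trans h1))
    exact IsIso.comp_isIso
  have hQtop : Q = ⊤ := by
    refine @Localization.Construction.morphismProperty_eq_top' _ _ _ Q hcomp ?_ ?_
    · intro X Y f hf
      have heq : F.map f = F'.map (W.Q.map f) := Subsingleton.elim _ _
      rw [← heq] at hf
      exact Localization.inverts W.Q W f hf
    · intro X Y e _ _
      exact inferInstance
  have hcons : ∀ {X Y : W.Localization} (f : X ⟶ Y), IsIso (F'.map f) → IsIso f := by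
    intro X Y f
    have : Q f := by rw [hQtop]; trivial
    exact this
  -- W.Localization is idempotent complete
  have hWL : IsIdempotentComplete W.Localization := by
    refine ⟨fun X p hp => ?_⟩
    have : IsIso p := hcons p (isIso_of_le _ le_rfl)
    have hp1 : p = 𝟙 X := by
      rw [← cancel_epi p, hp, Category.comp_id]
    exact ⟨X, 𝟙 X, 𝟙 X, by simp, by simp [hp1]⟩
  exact Idempotents.Equivalence.isIdempotentComplete (Localization.equivalenceFromModel L W) hWL
end

section
/- Let P be a poset regarded as a category, F : C ⥤ P a functor, W_P the class of morphisms f of C with F.map f an isomorphism, L : C ⥤ D a localization of C at W_P, and G : D ⥤ P a functor with a natural isomorphism L ⋙ G ≅ F. Let S ⊆ P be an ord-connected subset. Let C_S (resp. D_S) be the full subcategory of C (resp. D) spanned by the objects whose image under F (resp. G) lies in S, and let W_S be the class of morphisms f of C_S whose image under F is an isomorphism. Then the functor C_S ⥤ D_S induced by L (which carries C_S into D_S, since G(L X) = F(X) by antisymmetry of the partial order) is a localization of C_S at W_S. -/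
open CategoryTheory

noncomputable section
namespace StrataAux

variable {C : Type*} [Category C] {P : Type*} [PartialOrder P] (F : C ⥤ P) (S : Set P)

abbrev Wcl : MorphismProperty C := fun _ _ f => IsIso (F.map f)
abbrev PC : C → Prop := fun X => F.obj X ∈ S
abbrev CS := ObjectProperty.FullSubcategory (PC F S)
abbrev ιC : CS F S ⥤ C := ObjectProperty.ι (PC F S)
abbrev WS : MorphismProperty (CS F S) := fun _ _ f => IsIso (F.map ((ιC F S).map f))
abbrev E := (WS F S).Localization
abbrev Ehat := WithInitial (WithTerminal (E F S))
abbrev emb : E F S ⥤ Ehat F S := WithTerminal.incl ⋙ WithInitial.incl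
def Tp (p : P) : Prop := ∃ s ∈ S, s ≤ p

open Classical in
def PhiObj (X : C) : Ehat F S :=
  if h : PC F S X then (emb F S).obj ((WS F S).Q.obj ⟨X, h⟩)
  else if Tp S (F.obj X) then WithInitial.of WithTerminal.star
  else WithInitial.star

lemma phiObj_S {X : C} (h : PC F S X) :
    PhiObj F S X = (emb F S).obj ((WS F S).Q.obj ⟨X, h⟩) := dif_pos h

lemma phiObj_top {X : C} (h1 : ¬ PC F S X) (h2 : Tp S (F.obj X)) :
    PhiObj F S X = WithInitial.of WithTerminal.star := by
  rw [PhiObj, dif_neg h1, if_pos h2]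

lemma phiObj_bot {X : C} (h1 : ¬ PC F S X) (h2 : ¬ Tp S (F.obj X)) :
    PhiObj F S X = WithInitial.star := by
  rw [PhiObj, dif_neg h1, if_neg h2]

def toTop : ∀ x : Ehat F S, x ⟶ WithInitial.of WithTerminal.star
  | WithInitial.of a => WithInitial.incl.map (WithTerminal.starTerminal.from a)
  | WithInitial.star => WithInitial.homTo _

lemma hom_ext_to_top {x y : Ehat F S} (h : y = WithInitial.of WithTerminal.star)
    (f g : x ⟶ y) : f = g := by
  subst h
  cases x with
  | of a =>
    cases a with
    | of e => exact Subsingleton.elim (α := PUnit) f g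
    | star => exact Subsingleton.elim (α := PUnit) f g
  | star => exact Subsingleton.elim (α := PUnit) f g

lemma hom_ext_from_bot {x y : Ehat F S} (h : x = (WithInitial.star : Ehat F S))
    (f g : x ⟶ y) : f = g := by
  subst h
  exact Subsingleton.elim f g

variable (hS : S.OrdConnected)

section
variable {F S}

lemma le_map {X Y : C} (f : X ⟶ Y) : F.obj X ≤ F.obj Y := leOfHom (F.map f)

include hS in
lemma mem_of_between {X : C} {p : P} (hp : p ∈ S) (h1 : p ≤ F.obj X) {q : P}
    (hq : q ∈ S) (h2 : F.obj X ≤ q) : PC F S X :=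
  hS.out hp hq ⟨h1, h2⟩

include hS in
lemma not_tp_of_le_S {X Y : C} (f : X ⟶ Y) (hX : ¬ PC F S X) (hY : PC F S Y) :
    ¬ Tp S (F.obj X) := fun ⟨s, hs, hle⟩ => hX (mem_of_between hS hs hle hY (le_map f))

lemma tp_of_comes_from_S {X Y : C} (f : X ⟶ Y) (hX : PC F S X) : Tp S (F.obj Y) :=
  ⟨F.obj X, hX, le_map f⟩

lemma tp_mono {X Y : C} (f : X ⟶ Y) (h : Tp S (F.obj X)) : Tp S (F.obj Y) :=
  h.imp fun s hs => ⟨hs.1, hs.2.trans (le_map f)⟩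

end

def toCS {X Y : C} (hX : PC F S X) (hY : PC F S Y) (f : X ⟶ Y) :
    @Quiver.Hom (CS F S) CategoryStruct.toQuiver ⟨X, hX⟩ ⟨Y, hY⟩ := ObjectProperty.homMk f

@[simp] lemma toCS_id {X : C} (hX : PC F S X) : toCS F S hX hX (𝟙 X) = 𝟙 _ := rfl

@[simp] lemma toCS_comp {X Y Z : C} (hX : PC F S X) (hY : PC F S Y) (hZ : PC F S Z)
    (f : X ⟶ Y) (g : Y ⟶ Z) :
    toCS F S hX hZ (f ≫ g) = toCS F S hX hY f ≫ toCS F S hY hZ g := rfl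

open Classical in
def PhiMap {X Y : C} (f : X ⟶ Y) : PhiObj F S X ⟶ PhiObj F S Y :=
  if hY : PC F S Y then
    if hX : PC F S X then
      eqToHom (phiObj_S F S hX) ≫
        (emb F S).map ((WS F S).Q.map (toCS F S hX hY f)) ≫
        eqToHom (phiObj_S F S hY).symm
    else
      eqToHom (phiObj_bot F S hX (not_tp_of_le_S hS f hX hY)) ≫
        WithInitial.starInitial.to _
  else if hT : Tp S (F.obj Y) then
    toTop F S _ ≫ eqToHom (phiObj_top F S hY hT).symm
  else
    eqToHom (phiObj_bot F S (fun hX => hT (tp_of_comes_from_S f hX))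
      (fun hX => hT (tp_mono f hX))) ≫ WithInitial.starInitial.to _

lemma phiMap_S {X Y : C} (hX : PC F S X) (hY : PC F S Y) (f : X ⟶ Y) :
    PhiMap F S hS f = eqToHom (phiObj_S F S hX) ≫
      (emb F S).map ((WS F S).Q.map (toCS F S hX hY f)) ≫
      eqToHom (phiObj_S F S hY).symm := by
  unfold PhiMap
  rw [dif_pos hY, dif_pos hX]

lemma phiMap_id (X : C) : PhiMap F S hS (𝟙 X) = 𝟙 (PhiObj F S X) := by
  by_cases hX : PC F S X
  · rw [phiMap_S F S hS hX hX, toCS_id]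
    simp
  · by_cases hT : Tp S (F.obj X)
    · exact hom_ext_to_top F S (phiObj_top F S hX hT) _ _
    · exact hom_ext_from_bot F S (phiObj_bot F S hX hT) _ _

lemma phiMap_comp {X Y Z : C} (f : X ⟶ Y) (g : Y ⟶ Z) :
    PhiMap F S hS (f ≫ g) = PhiMap F S hS f ≫ PhiMap F S hS g := by
  by_cases hX : PC F S X
  · by_cases hZ : PC F S Z
    · have hY : PC F S Y := mem_of_between hS hX (le_map f) hZ (le_map g)
      rw [phiMap_S F S hS hX hZ, phiMap_S F S hS hX hY, phiMap_S F S hS hY hZ,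
        toCS_comp F S hX hY hZ]
      simp
    · exact hom_ext_to_top F S
        (phiObj_top F S hZ (tp_of_comes_from_S (f ≫ g) hX)) _ _
  · by_cases hT : Tp S (F.obj X)
    · have hZ : ¬ PC F S Z := fun hZ => hX (mem_of_between hS hT.choose_spec.1
        hT.choose_spec.2 hZ (le_map (f ≫ g)))
      exact hom_ext_to_top F S (phiObj_top F S hZ (tp_mono (f ≫ g) hT)) _ _
    · exact hom_ext_from_bot F S (phiObj_bot F S hX hT) _ _

def Phi : C ⥤ Ehat F S where
  obj := PhiObj F S
  map := PhiMap F S hS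
  map_id := phiMap_id F S hS
  map_comp := phiMap_comp F S hS

lemma phi_inverts : (Wcl F).IsInvertedBy (Phi F S hS) := by
  intro X Y w hw
  have heq : F.obj X = F.obj Y :=
    le_antisymm (leOfHom (F.map w)) (leOfHom (inv (F.map w)))
  by_cases hX : PC F S X
  · have hY : PC F S Y := by rwa [PC, ← heq]
    show IsIso (PhiMap F S hS w)
    rw [phiMap_S F S hS hX hY]
    have hw' : WS F S (toCS F S hX hY w) := hw
    haveI : IsIso ((WS F S).Q.map (toCS F S hX hY w)) :=
      Localization.inverts (WS F S).Q (WS F S) (toCS F S hX hY w) hw'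
    refine ⟨⟨eqToHom (phiObj_S F S hY) ≫
      (emb F S).map (inv ((WS F S).Q.map (toCS F S hX hY w))) ≫
      eqToHom (phiObj_S F S hX).symm, ?_, ?_⟩⟩ <;>
      simp [← Functor.map_comp]
  · have hY : ¬ PC F S Y := by rwa [PC, ← heq]
    by_cases hT : Tp S (F.obj X)
    · have hTY : Tp S (F.obj Y) := heq ▸ hT
      have : PhiMap F S hS w =
          eqToHom ((phiObj_top F S hX hT).trans (phiObj_top F S hY hTY).symm) :=
        hom_ext_to_top F S (phiObj_top F S hY hTY) _ _
      rw [show (Phi F S hS).map w = PhiMap F S hS w from rfl, this]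
      exact Iso.isIso_hom (eqToIso ((phiObj_top F S hX hT).trans (phiObj_top F S hY hTY).symm))
    · have hTY : ¬ Tp S (F.obj Y) := heq ▸ hT
      have : PhiMap F S hS w =
          eqToHom ((phiObj_bot F S hX hT).trans (phiObj_bot F S hY hTY).symm) :=
        hom_ext_from_bot F S (phiObj_bot F S hX hT) _ _
      rw [show (Phi F S hS).map w = PhiMap F S hS w from rfl, this]
      exact Iso.isIso_hom (eqToIso ((phiObj_bot F S hX hT).trans (phiObj_bot F S hY hTY).symm))

/-- `F` itself inverts `Wcl F` -/
lemma F_inverts : (Wcl F).IsInvertedBy F := fun _ _ _ hf => hf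

/-- the induced functor to the poset on the localized category -/
def G0 : (Wcl F).Localization ⥤ P :=
  Localization.Construction.lift F (F_inverts F)

lemma G0_obj_Q (X : C) : (G0 F).obj ((Wcl F).Q.obj X) = F.obj X :=
  Functor.congr_obj (Localization.Construction.fac F (F_inverts F)) X

/-- the predicate on objects of the localized category -/
abbrev PD : (Wcl F).Localization → Prop := fun y => (G0 F).obj y ∈ S

abbrev DS := ObjectProperty.FullSubcategory (PD F S)

abbrev ιD : DS F S ⥤ (Wcl F).Localization := ObjectProperty.ι (PD F S)

/-- the canonical functor `C_S ⥤ D_S` induced by `W.Q` -/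
def Lft : CS F S ⥤ DS F S :=
  ObjectProperty.lift (PD F S) (ιC F S ⋙ (Wcl F).Q)
    (fun X => by
      show (G0 F).obj ((Wcl F).Q.obj X.obj) ∈ S
      rw [G0_obj_Q]
      exact X.property)

lemma Lft_inverts : (WS F S).IsInvertedBy (Lft F S) := by
  intro A B f hf
  have h1 : IsIso ((Wcl F).Q.map ((ιC F S).map f)) :=
    Localization.inverts (Wcl F).Q (Wcl F) ((ιC F S).map f) hf
  have h2 : IsIso ((ιD F S).map ((Lft F S).map f)) := h1
  exact isIso_of_fully_faithful (ιD F S) ((Lft F S).map f)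

/-- the comparison functor from the constructed localization of `C_S` -/
def ell : (WS F S).Localization ⥤ DS F S :=
  Localization.Construction.lift (Lft F S) (Lft_inverts F S)

lemma fac_ell : (WS F S).Q ⋙ ell F S = Lft F S :=
  Localization.Construction.fac _ _

def Psi : (Wcl F).Localization ⥤ Ehat F S :=
  Localization.Construction.lift (Phi F S hS) (phi_inverts F S hS)

lemma fac_Psi : (Wcl F).Q ⋙ Psi F S hS = Phi F S hS :=
  Localization.Construction.fac _ _

lemma key : ell F S ⋙ ιD F S ⋙ Psi F S hS = emb F S := by
  apply Localization.Construction.uniq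
  have h1 : (WS F S).Q ⋙ ell F S ⋙ ιD F S ⋙ Psi F S hS =
      (ιC F S ⋙ (Wcl F).Q) ⋙ Psi F S hS := by
    rw [← Functor.assoc, fac_ell]
    rfl
  rw [h1, Functor.assoc, fac_Psi]
  -- remains : ιC ⋙ Phi = WS.Q ⋙ emb
  have hobj : ∀ A : CS F S, (ιC F S ⋙ Phi F S hS).obj A =
      ((WS F S).Q ⋙ emb F S).obj A := fun A => phiObj_S F S A.property
  exact CategoryTheory.Functor.ext hobj (fun A B f => by
    show PhiMap F S hS ((ιC F S).map f) = _
    rw [phiMap_S F S hS A.property B.property]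
    rfl)

include hS in
lemma ell_faithful : (ell F S).Faithful := by
  have h : (ell F S ⋙ ιD F S ⋙ Psi F S hS).Faithful := by
    rw [key F S hS]
    infer_instance
  exact Functor.Faithful.of_comp (ell F S) (ιD F S ⋙ Psi F S hS)

lemma ell_essSurj : (ell F S).EssSurj := by
  constructor
  intro d
  have hd : (Wcl F).Q.obj (d.obj.as.obj) = d.obj :=
    (Localization.Construction.objEquiv (Wcl F)).right_inv d.obj
  have hmem : PC F S (d.obj.as.obj) := by
    show F.obj d.obj.as.obj ∈ S
    rw [← G0_obj_Q, hd]
    exact d.property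
  refine ⟨(WS F S).Q.obj ⟨d.obj.as.obj, hmem⟩, ⟨eqToIso ?_⟩⟩
  have h1 : (ell F S).obj ((WS F S).Q.obj ⟨d.obj.as.obj, hmem⟩) =
      (Lft F S).obj ⟨d.obj.as.obj, hmem⟩ :=
    Functor.congr_obj (fac_ell F S) _
  rw [h1]
  have : ((Lft F S).obj ⟨d.obj.as.obj, hmem⟩).obj = d.obj := hd
  cases d with
  | mk dobj dprop =>
    exact ObjectProperty.FullSubcategory.ext this

/-- canonical preimage in `C_S` of an object of the localization satisfying `PD` -/
def rho (u : (Wcl F).Localization) (hu : PD F S u) : CS F S :=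
  ⟨u.as.obj, by
    show F.obj u.as.obj ∈ S
    have hd : (Wcl F).Q.obj u.as.obj = u :=
      (Localization.Construction.objEquiv (Wcl F)).right_inv u
    rw [← G0_obj_Q, hd]
    exact hu⟩

lemma rho_eq (u : (Wcl F).Localization) (hu : PD F S u) :
    (ιD F S).obj ((ell F S).obj ((WS F S).Q.obj (rho F S u hu))) = u := by
  have h1 : (ell F S).obj ((WS F S).Q.obj (rho F S u hu)) =
      (Lft F S).obj (rho F S u hu) := Functor.congr_obj (fac_ell F S) _
  rw [h1]
  have hd : (Wcl F).Q.obj u.as.obj = u :=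
    (Localization.Construction.objEquiv (Wcl F)).right_inv u
  exact hd

/-- the property used for the fullness induction -/
def Pfull : MorphismProperty (Wcl F).Localization := fun u v g =>
  ∀ (hu : PD F S u) (hv : PD F S v),
    ∃ f : (WS F S).Q.obj (rho F S u hu) ⟶ (WS F S).Q.obj (rho F S v hv),
      (ιD F S).map ((ell F S).map f) = eqToHom (rho_eq F S u hu) ≫ g ≫
        eqToHom (rho_eq F S v hv).symm

include hS in
theorem pfull_stable : (Pfull F S).IsStableUnderComposition where
  comp_mem {u v w} g₁ g₂ h₁ h₂ := by
    intro hu hw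
    have hv : PD F S v :=
      hS.out hu hw ⟨leOfHom ((G0 F).map g₁), leOfHom ((G0 F).map g₂)⟩
    obtain ⟨f₁, hf₁⟩ := h₁ hu hv
    obtain ⟨f₂, hf₂⟩ := h₂ hv hw
    refine ⟨f₁ ≫ f₂, ?_⟩
    rw [Functor.map_comp, Functor.map_comp, hf₁, hf₂]
    simp

lemma ell_map_Q {A B : CS F S} (f : A ⟶ B) :
    (ell F S).map ((WS F S).Q.map f) =
      eqToHom (Functor.congr_obj (fac_ell F S) A) ≫ (Lft F S).map f ≫
      eqToHom (Functor.congr_obj (fac_ell F S) B).symm :=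
  Functor.congr_hom (fac_ell F S) f

include hS in
lemma pfull_top : Pfull F S = ⊤ := by
  haveI := pfull_stable F S hS
  apply Localization.Construction.morphismProperty_eq_top
  · -- images of morphisms of C
    intro a b φ
    intro hu hv
    have ha : PC F S a := by
      show F.obj a ∈ S
      rw [← G0_obj_Q]
      exact hu
    have hb : PC F S b := by
      show F.obj b ∈ S
      rw [← G0_obj_Q]
      exact hv
    refine ⟨(WS F S).Q.map (ObjectProperty.homMk φ : rho F S _ hu ⟶ rho F S _ hv), ?_⟩
    rw [ell_map_Q]
    have h1 : (ιD F S).map ((Lft F S).map (ObjectProperty.homMk φ : rho F S _ hu ⟶ rho F S _ hv)) = (Wcl F).Q.map φ := rfl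
    simp only [Functor.map_comp, eqToHom_map, h1]
    rfl
  · -- formal inverses
    intro a b w hw
    intro hu hv
    have ha : PC F S a := by
      show F.obj a ∈ S
      rw [← G0_obj_Q]
      exact hv
    have hb : PC F S b := by
      show F.obj b ∈ S
      rw [← G0_obj_Q]
      exact hu
    have hw' : WS F S ((ObjectProperty.homMk w : rho F S _ hv ⟶ rho F S _ hu)) := hw
    haveI : IsIso ((WS F S).Q.map ((ObjectProperty.homMk w : rho F S _ hv ⟶ rho F S _ hu))) :=
      Localization.inverts (WS F S).Q (WS F S) ((ObjectProperty.homMk w : rho F S _ hv ⟶ rho F S _ hu)) hw'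
    refine ⟨inv ((WS F S).Q.map ((ObjectProperty.homMk w : rho F S _ hv ⟶ rho F S _ hu))), ?_⟩
    have h1 : (ιD F S).map ((ell F S).map ((WS F S).Q.map ((ObjectProperty.homMk w : rho F S _ hv ⟶ rho F S _ hu)))) =
        eqToHom (rho_eq F S ((Wcl F).Q.obj a) hv) ≫ (Wcl F).Q.map w ≫
        eqToHom (rho_eq F S ((Wcl F).Q.obj b) hu).symm := by
      rw [ell_map_Q]
      simp only [Functor.map_comp, eqToHom_map]
      rfl
    have h3 : (Wcl F).Q.map w ≫ Localization.Construction.wInv w hw = 𝟙 _ :=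
      (Localization.Construction.wIso w hw).hom_inv_id
    rw [Functor.map_inv, Functor.map_inv]
    refine IsIso.inv_eq_of_hom_inv_id ?_
    rw [h1]
    simp only [Category.assoc, eqToHom_trans_assoc, eqToHom_refl, Category.id_comp,
      h3, reassoc_of% h3]
    rfl

include hS in
lemma ell_full : (ell F S).Full := by
  constructor
  intro x y g
  obtain ⟨a, rfl⟩ : ∃ a : CS F S, (WS F S).Q.obj a = x :=
    ⟨x.as.obj, (Localization.Construction.objEquiv (WS F S)).right_inv x⟩
  obtain ⟨b, rfl⟩ : ∃ b : CS F S, (WS F S).Q.obj b = y :=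
    ⟨y.as.obj, (Localization.Construction.objEquiv (WS F S)).right_inv y⟩
  have hP : Pfull F S ((ιD F S).map g) := by
    rw [pfull_top F S hS]
    trivial
  obtain ⟨f, hf⟩ := hP ((ell F S).obj ((WS F S).Q.obj a)).property
    ((ell F S).obj ((WS F S).Q.obj b)).property
  rw [show eqToHom (rho_eq F S _ ((ell F S).obj ((WS F S).Q.obj a)).property) =
      𝟙 _ from rfl,
    show eqToHom (rho_eq F S _ ((ell F S).obj ((WS F S).Q.obj b)).property).symm =
      𝟙 _ from rfl] at hf
  refine ⟨f, (ιD F S).map_injective (hf.trans ?_)⟩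
  exact (Category.id_comp _).trans (Category.comp_id _)

include hS in
lemma main0 : (Lft F S).IsLocalization (WS F S) := by
  haveI : (ell F S).Faithful := ell_faithful F S hS
  haveI : (ell F S).Full := ell_full F S hS
  haveI : (ell F S).EssSurj := ell_essSurj F S
  haveI h : (ell F S).IsEquivalence := { }
  exact { inverts := Lft_inverts F S, isEquivalence := h }

section Transport

variable {D : Type*} [Category D] (L : C ⥤ D) (G : D ⥤ P)
  [L.IsLocalization (Wcl F)]

def eqWD : (Wcl F).Localization ≌ D := Localization.uniq (Wcl F).Q L (Wcl F)

def cIso : (Wcl F).Q ⋙ (eqWD F L).functor ≅ L := Localization.compUniqFunctor _ _ _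

variable (e : L ⋙ G ≅ F)

include e in
lemma G_obj_L (X : C) : G.obj (L.obj X) = F.obj X :=
  le_antisymm (leOfHom (e.hom.app X)) (leOfHom (e.inv.app X))

include e in
lemma G_eqWD (y : (Wcl F).Localization) :
    (G0 F).obj y = G.obj ((eqWD F L).functor.obj y) := by
  obtain ⟨a, rfl⟩ : ∃ a, (Wcl F).Q.obj a = y :=
    ⟨y.as.obj, (Localization.Construction.objEquiv (Wcl F)).right_inv y⟩
  rw [G0_obj_Q]
  have h1 : G.obj ((eqWD F L).functor.obj ((Wcl F).Q.obj a)) = G.obj (L.obj a) :=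
    le_antisymm (leOfHom (G.map ((cIso F L).hom.app a)))
      (leOfHom (G.map ((cIso F L).inv.app a)))
  rw [h1, G_obj_L F L G e]

abbrev PDS : D → Prop := fun Y => G.obj Y ∈ S

def eqSub : DS F S ≌ ObjectProperty.FullSubcategory (PDS S G) where
  functor := ObjectProperty.lift _ (ιD F S ⋙ (eqWD F L).functor)
    (fun y => by
      show G.obj ((eqWD F L).functor.obj y.obj) ∈ S
      rw [← G_eqWD F L G e]
      exact y.property)
  inverse := ObjectProperty.lift _
      (ObjectProperty.ι (PDS S G) ⋙ (eqWD F L).inverse)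
    (fun d => by
      show (G0 F).obj ((eqWD F L).inverse.obj d.obj) ∈ S
      rw [G_eqWD F L G e]
      have h2 : G.obj ((eqWD F L).functor.obj ((eqWD F L).inverse.obj d.obj)) =
          G.obj d.obj :=
        le_antisymm (leOfHom (G.map ((eqWD F L).counit.app d.obj)))
          (leOfHom (G.map ((eqWD F L).counitInv.app d.obj)))
      rw [h2]
      exact d.property)
  unitIso := NatIso.ofComponents
    (fun y => ObjectProperty.isoMk _ ((eqWD F L).unitIso.app y.obj))
    (fun f => ObjectProperty.hom_ext _ ((eqWD F L).unit.naturality ((ιD F S).map f)))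
  counitIso := NatIso.ofComponents
    (fun d => ObjectProperty.isoMk _ ((eqWD F L).counitIso.app d.obj))
    (fun f => ObjectProperty.hom_ext _ ((eqWD F L).counit.naturality ((ObjectProperty.ι (PDS S G)).map f)))
  functor_unitIso_comp := fun y => ObjectProperty.hom_ext _ ((eqWD F L).functor_unitIso_comp y.obj)

end Transport

end StrataAux
end

open StrataAux

/-- Strata of localizations: if `L : C ⥤ D` is a localization of `C` at the class of
morphisms inverted by `F : C ⥤ P` (with `P` a poset), `G : D ⥤ P` satisfies `L ⋙ G ≅ F`,
and `S ⊆ P` is ord-connected (locally closed), then the functor induced by `L` from the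
full subcategory `C_S` to the full subcategory `D_S` is a localization of `C_S` at the
class of morphisms inverted by `F`. -/
theorem localization_restrict_to_locally_closed_subposet
    {C : Type*} [Category C] {D : Type*} [Category D]
    {P : Type*} [PartialOrder P]
    (F : C ⥤ P) (L : C ⥤ D) (G : D ⥤ P)
    (hL : L.IsLocalization (fun _ _ f => IsIso (F.map f)))
    (e : L ⋙ G ≅ F)
    (S : Set P) (hS : S.OrdConnected) :
    (ObjectProperty.lift (fun Y : D => G.obj Y ∈ S)
        (ObjectProperty.ι (fun X : C => F.obj X ∈ S) ⋙ L)
        (fun X => by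
          have h : G.obj (L.obj X.obj) = F.obj X.obj :=
            le_antisymm (leOfHom (e.hom.app X.obj)) (leOfHom (e.inv.app X.obj))
          show G.obj (L.obj X.obj) ∈ S
          rw [h]
          exact X.property)).IsLocalization
      (fun _ _ f => IsIso
        (F.map ((ObjectProperty.ι (fun X : C => F.obj X ∈ S)).map f))) := by
  haveI : L.IsLocalization (Wcl F) := hL
  haveI : (Lft F S).IsLocalization (WS F S) := main0 F S hS
  refine Functor.IsLocalization.of_equivalence_target (Lft F S) (WS F S) _
    (eqSub F S L G e) ?_
  exact NatIso.ofComponents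
    (fun X => ObjectProperty.isoMk _ ((cIso F L).app X.obj))
    (fun f => ObjectProperty.hom_ext _ ((cIso F L).hom.naturality ((ιC F S).map f)))
end

section
/- Let P be a poset regarded as a category, let F : C ⥤ P be a functor from a small category, and let Z ⊆ P be a lower set. Let ι : C_Z ⥤ C be the inclusion of the full subcategory of objects X with F.obj X ∈ Z. Then for every functor G : C_Z ⥤ Type and every object c of C with F.obj c ∉ Z, the value at c of the pointwise right Kan extension of G along ι is a terminal type (i.e., it is equivalent to PUnit). -/
open CategoryTheory

/-- Let `F : C ⥤ P` be a functor from a small category to a poset and `Z ⊆ P` a lower set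
(a closed subset of the Alexandroff upper-set topology). For every `G : C_Z ⥤ Type` and
every `c : C` with `F.obj c ∉ Z`, the value at `c` of the (pointwise) right Kan extension
of `G` along the full inclusion `ι : C_Z ⥤ C` is a terminal type, i.e. equivalent to `PUnit`. -/
theorem ran_along_closed_part_is_terminal_off_Z
    {C : Type} [SmallCategory C] {P : Type} [PartialOrder P]
    (F : C ⥤ P) (Z : Set P) (hZ : IsLowerSet Z)
    (G : ObjectProperty.FullSubcategory (fun X : C => F.obj X ∈ Z) ⥤ Type)
    (c : C) (hc : F.obj c ∉ Z) :
    Nonempty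
      ((((ObjectProperty.ι (fun X : C => F.obj X ∈ Z)).ran.obj G).obj c) ≃ PUnit) := by
  set ι := ObjectProperty.ι (fun X : C => F.obj X ∈ Z)
  have hempty : IsEmpty (StructuredArrow c ι) := by
    constructor
    rintro ⟨⟨⟩, X, f⟩
    exact hc (hZ (leOfHom (F.map f)) X.2)
  have e1 := (Functor.ranObjObjIsoLimit ι G c).toEquiv
  have e2 := Limits.Types.limitEquivSections (StructuredArrow.proj c ι ⋙ G)
  have : Unique ((StructuredArrow.proj c ι ⋙ G).sections) := by
    refine ⟨⟨⟨fun j => isEmptyElim j, fun {j} => isEmptyElim j⟩⟩, ?_⟩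
    intro a
    ext j
    exact isEmptyElim j
  exact ⟨(e1.trans e2).trans (Equiv.equivPUnit _)⟩
end

section
/- Let P be a poset regarded as a category, let F : C ⥤ P be a functor from a small category, and let U ⊆ P be an upper set. Let ι : C_U ⥤ C be the inclusion of the full subcategory of objects X with F.obj X ∈ U. Then for every functor G : C_U ⥤ Type and every object c of C with F.obj c ∉ U, the value at c of the pointwise left Kan extension of G along ι is an empty type (an initial object of Type). -/
open CategoryTheory

/-- Let `F : C ⥤ P` be a functor from a small category to a poset and `U ⊆ P` an upper set
(an open subset of the Alexandroff upper-set topology). For every `G : C_U ⥤ Type` and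
every `c : C` with `F.obj c ∉ U`, the value at `c` of the (pointwise) left Kan extension
of `G` along the full inclusion `ι : C_U ⥤ C` is an empty type (an initial object of `Type`). -/
theorem lan_along_open_part_is_empty_off_U
    {C : Type} [SmallCategory C] {P : Type} [PartialOrder P]
    (F : C ⥤ P) (U : Set P) (hU : IsUpperSet U)
    (G : ObjectProperty.FullSubcategory (fun X : C => F.obj X ∈ U) ⥤ Type)
    (c : C) (hc : F.obj c ∉ U) :
    IsEmpty (((ObjectProperty.ι (fun X : C => F.obj X ∈ U)).lan.obj G).obj c) := by
  set ι := ObjectProperty.ι (fun X : C => F.obj X ∈ U)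
  have hempty : IsEmpty (CostructuredArrow ι c) := by
    constructor
    intro g
    exact hc (hU (leOfHom (F.map g.hom)) g.left.property)
  have h : (Functor.LeftExtension.mk _
      (ι.lanUnit.app G)).IsPointwiseLeftKanExtensionAt c :=
    Functor.isPointwiseLeftKanExtensionOfIsLeftKanExtension _ (ι.lanUnit.app G) c
  constructor
  intro x
  obtain ⟨j, y, -⟩ := Limits.Types.jointly_surjective _ h x
  exact hempty.false j
end

section
/- Let L : C ⥤ D be a localization of C at a class of morphisms W. If c is an initial object of C, then L.obj c is an initial object of D. -/
open CategoryTheory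

/-- Localization functors preserve initial objects. -/
theorem localization_preserves_initial
    {C : Type*} [Category C] {D : Type*} [Category D]
    (L : C ⥤ D) (W : MorphismProperty C) [L.IsLocalization W]
    (c : C) (hc : Limits.IsInitial c) :
    Nonempty (Limits.IsInitial (L.obj c)) := by
  let G : Discrete PUnit.{1} ⥤ C := Functor.fromPUnit c
  let F : C ⥤ Discrete PUnit.{1} := Functor.star C
  let adj : G ⊣ F := Adjunction.mkOfHomEquiv
    { homEquiv := fun _ X =>
        { toFun := fun _ => ⟨⟨Subsingleton.elim _ _⟩⟩
          invFun := fun _ => hc.to X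
          left_inv := fun f => hc.hom_ext _ _
          right_inv := fun f => Subsingleton.elim _ _ }
      homEquiv_naturality_left_symm := fun _ _ => hc.hom_ext _ _
      homEquiv_naturality_right := fun _ _ => Subsingleton.elim _ _ }
  haveI : (𝟭 (Discrete PUnit.{1})).IsLocalization (MorphismProperty.isomorphisms _) :=
    Functor.IsLocalization.for_id _ le_rfl
  let G' : Discrete PUnit.{1} ⥤ D := Functor.fromPUnit (L.obj c)
  let F' : D ⥤ Discrete PUnit.{1} := Functor.star D
  haveI : CatCommSq G (𝟭 _) L G' :=
    ⟨NatIso.ofComponents (fun _ => Iso.refl _) (by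
      rintro ⟨⟨⟩⟩ ⟨⟨⟩⟩ f
      simp [G, G'])⟩
  haveI : CatCommSq F L (𝟭 _) F' := ⟨Functor.punitExt _ _⟩
  let adj' : G' ⊣ F' :=
    adj.localization (𝟭 _) (MorphismProperty.isomorphisms _) L W G' F'
  exact ⟨Limits.IsInitial.ofUniqueHom
    (fun d => (adj'.homEquiv ⟨PUnit.unit⟩ d).symm ⟨⟨Subsingleton.elim _ _⟩⟩)
    (fun d m => by
      have := congrArg (adj'.homEquiv ⟨PUnit.unit⟩ d).symm
        (Subsingleton.elim (adj'.homEquiv ⟨PUnit.unit⟩ d m) ⟨⟨Subsingleton.elim _ _⟩⟩)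
      simpa using this)⟩
end

section
/- Let P be a partial order equipped with a topology in which the open sets are exactly the upper sets (the Alexandroff topology). Then a subset S ⊆ P is locally closed if and only if S is ord-connected, i.e., an interval: for all p, q ∈ S and all x with p ≤ x ≤ q, one has x ∈ S. -/
open CategoryTheory

/-- In a poset equipped with the Alexandroff topology (open sets = upper sets),
a subset is locally closed if and only if it is ord-connected (an interval). -/
theorem isLocallyClosed_iff_ordConnected
    {P : Type*} [PartialOrder P] [TopologicalSpace P] [Topology.IsUpperSet P]
    (S : Set P) :
    IsLocallyClosed S ↔ S.OrdConnected := by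
  constructor
  · rintro ⟨U, Z, hU, hZ, rfl⟩
    rw [Topology.IsUpperSet.isOpen_iff_isUpperSet] at hU
    rw [Topology.IsUpperSet.isClosed_iff_isLower] at hZ
    constructor
    rintro x ⟨hxU, hxZ⟩ y ⟨hyU, hyZ⟩ z ⟨hxz, hzy⟩
    exact ⟨hU hxz hxU, hZ hzy hyZ⟩
  · intro hS
    refine ⟨↑(upperClosure S), ↑(lowerClosure S),
      Topology.IsUpperSet.isOpen_iff_isUpperSet.2 (upperClosure S).upper,
      Topology.IsUpperSet.isClosed_iff_isLower.2 (lowerClosure S).lower, ?_⟩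
    apply subset_antisymm
    · exact Set.subset_inter (subset_upperClosure) (subset_lowerClosure)
    · rintro x ⟨⟨p, hp, hpx⟩, ⟨q, hq, hxq⟩⟩
      exact hS.out hp hq ⟨hpx, hxq⟩
end

section
/- Let F : C ⥤ D be a functor between small categories, and let F_! : (C ⥤ Type) ⥤ (D ⥤ Type) denote the left Kan extension functor along F (the left adjoint to precomposition with F). Then F is fully faithful if and only if F_! is fully faithful. -/
open CategoryTheory

/-- A functor `F : C ⥤ D` between small categories is fully faithful if and only if the
left Kan extension functor `F_! : (C ⥤ Type) ⥤ (D ⥤ Type)` along `F` is fully faithful. -/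
theorem fullyFaithful_iff_lan_fullyFaithful
    {C D : Type} [SmallCategory C] [SmallCategory D] (F : C ⥤ D) :
    (F.Full ∧ F.Faithful) ↔
      ((F.lan : (C ⥤ Type) ⥤ (D ⥤ Type)).Full ∧
        (F.lan : (C ⥤ Type) ⥤ (D ⥤ Type)).Faithful) := by
  constructor
  · rintro ⟨h1, h2⟩
    have h : IsIso (F.lanAdjunction Type).unit := inferInstance
    have ff := Adjunction.fullyFaithfulLOfIsIsoUnit (F.lanAdjunction Type)
    exact ⟨ff.full, ff.faithful⟩
  · rintro ⟨h1, h2⟩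
    have hu : IsIso (F.lanAdjunction Type).unit :=
      Adjunction.unit_isIso_of_L_fully_faithful (F.lanAdjunction Type)
    -- unit at representables
    have key : ∀ (c c' : C) (f : c ⟶ c'),
        ((F.lanAdjunction Type).unit.app (coyoneda.obj (Opposite.op c))).app c' f =
          (F.lan.obj (coyoneda.obj (Opposite.op c))).map (F.map f)
            (((F.lanAdjunction Type).unit.app (coyoneda.obj (Opposite.op c))).app c (𝟙 c)) := by
      intro c c' f
      have := ConcreteCategory.congr_hom
        (((F.lanAdjunction Type).unit.app (coyoneda.obj (Opposite.op c))).naturality f) (𝟙 c)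
      simpa using this
    have bij : ∀ (c c' : C), Function.Bijective
        (((F.lanAdjunction Type).unit.app (coyoneda.obj (Opposite.op c))).app c') := by
      intro c c'
      rw [← CategoryTheory.isIso_iff_bijective]
      infer_instance
    -- the "evaluation at u" map is injective
    have inj : ∀ (c c' : C) (g g' : F.obj c ⟶ F.obj c'),
        (F.lan.obj (coyoneda.obj (Opposite.op c))).map g
            (((F.lanAdjunction Type).unit.app (coyoneda.obj (Opposite.op c))).app c (𝟙 c)) =
          (F.lan.obj (coyoneda.obj (Opposite.op c))).map g'
            (((F.lanAdjunction Type).unit.app (coyoneda.obj (Opposite.op c))).app c (𝟙 c)) →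
          g = g' := by
      intro c c' g g' h
      set P : C ⥤ Type := coyoneda.obj (Opposite.op c) with hP
      let β : P ⟶ F ⋙ coyoneda.obj (Opposite.op (F.obj c)) :=
        { app := fun x => TypeCat.ofHom (fun φ => F.map φ)
          naturality := by intro x y ψ; ext φ; simp [P] }
      let α : F.lan.obj P ⟶ coyoneda.obj (Opposite.op (F.obj c)) :=
        ((F.lanAdjunction Type).homEquiv P (coyoneda.obj (Opposite.op (F.obj c)))).symm β
      have hα : (F.lanAdjunction Type).unit.app P ≫
          ((Functor.whiskeringLeft C D Type).obj F).map α = β := by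
        have := ((F.lanAdjunction Type).homEquiv P
          (coyoneda.obj (Opposite.op (F.obj c)))).apply_symm_apply β
        rwa [Adjunction.homEquiv_unit] at this
      have hαu : α.app (F.obj c)
          (((F.lanAdjunction Type).unit.app P).app c (𝟙 c)) = 𝟙 (F.obj c) := by
        have := ConcreteCategory.congr_hom (congr_app hα c) (𝟙 c)
        simpa [β] using this
      have nat : ∀ (g : F.obj c ⟶ F.obj c'),
          α.app (F.obj c') ((F.lan.obj P).map g
            (((F.lanAdjunction Type).unit.app P).app c (𝟙 c))) = g := by
        intro g
        have := ConcreteCategory.congr_hom (α.naturality g)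
          (((F.lanAdjunction Type).unit.app P).app c (𝟙 c))
        simp only [types_comp_apply] at this
        rw [this, hαu]
        simp
      have := nat g
      rw [h, nat g'] at this
      exact this.symm
    refine ⟨⟨?_⟩, ⟨?_⟩⟩
    · intro c c' g
      obtain ⟨f, hf⟩ := (bij c c').2
        ((F.lan.obj (coyoneda.obj (Opposite.op c))).map g
          (((F.lanAdjunction Type).unit.app (coyoneda.obj (Opposite.op c))).app c (𝟙 c)))
      exact ⟨f, inj c c' (F.map f) g (by rw [← key c c' f, hf])⟩
    · intro c c' f g hfg
      apply (bij c c').1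
      rw [key c c' f, key c c' g, hfg]
end
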